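/- arXiv:2502.18895 — 3 statements merged into one kernel-verified Lean document; each statement's English description precedes it below -/
import Mathlib

section
/- Let H be a finite-dimensional vector space with nondegenerate symmetric bilinear form η, and let S(z) = I + S_1 z^{-1} + S_2 z^{-2} + ⋯ ∈ End(H)[[z^{-1}]] satisfy the symplectic condition S*(-z)S(z) = I, where S*(z) is the η-adjoint. Then the series S*(z)S(w) - I ∈ End(H)[[z^{-1}, w^{-1}]] is divisible by (z^{-1} + w^{-1}); i.e., there exists W(z,w) = Σ_{k,l ≥ 0} W_{k,l} z^{-k} w^{-l} ∈ End(H)[[z^{-1}, w^{-1}]] with (z^{-1} + w^{-1})·W(z,w) = S*(z)S(w) - I. -/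
/-- For `S(z) = I + Σ_{n≥1} S_n z^{-n}` satisfying the symplectic condition
`S*(-z)S(z) = I` (with `Sadj n` the `η`-adjoint of `S n`), the series
`S*(z)S(w) - I` is divisible by `z⁻¹ + w⁻¹`: there exists
`W(z,w) = Σ_{k,l≥0} W_{k,l} z^{-k} w^{-l}` with
`(z⁻¹ + w⁻¹)·W(z,w) = S*(z)S(w) - I`, stated coefficientwise. -/
theorem stmt13 (K : Type*) [Field K] (H : Type*) [AddCommGroup H] [Module K H]
    [FiniteDimensional K H]
    (η : LinearMap.BilinForm K H) (hsymm : η.IsSymm) (hnd : η.Nondegenerate)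
    (S Sadj : ℕ → Module.End K H) (hS0 : S 0 = 1)
    (hadj : ∀ n : ℕ, ∀ x y : H, η (Sadj n x) y = η x (S n y))
    (hsymp : ∀ n : ℕ,
      ∑ i ∈ Finset.range (n + 1), ((-1 : K) ^ i) • (Sadj i * S (n - i))
        = if n = 0 then 1 else 0) :
    ∃ W : ℕ → ℕ → Module.End K H, ∀ k l : ℕ,
      (if k = 0 then 0 else W (k - 1) l) + (if l = 0 then 0 else W k (l - 1))
        = Sadj k * S l - if k = 0 ∧ l = 0 then 1 else 0 := by
  have hSadj0 : Sadj 0 = 1 := by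
    ext x
    have h : ∀ y : H, η (Sadj 0 x - x) y = 0 := by
      intro y
      have := hadj 0 x y
      rw [hS0] at this
      simp [map_sub, this]
    have := hnd.1 _ h
    simpa [sub_eq_zero] using this
  refine ⟨fun k l => ∑ i ∈ Finset.range (k + 1),
      ((-1 : K) ^ (k + i)) • (Sadj i * S (l + k + 1 - i)), fun k l => ?_⟩
  match k, l with
  | 0, 0 =>
    simp [hSadj0, hS0]
  | 0, (l + 1) =>
    simp [hSadj0]
  | (k + 1), 0 =>
    have hs := hsymp (k + 1)
    rw [if_neg (Nat.succ_ne_zero k), Finset.sum_range_succ] at hs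
    simp only [Nat.sub_self] at hs
    have hA : ∑ i ∈ Finset.range (k + 1), ((-1 : K) ^ i) • (Sadj i * S (k + 1 - i))
        = ((-1 : K) ^ k) • (Sadj (k + 1) * S 0) := by
      have h1 := eq_neg_of_add_eq_zero_left hs
      rw [h1, ← neg_smul]
      congr 1
      ring
    simp only [Nat.succ_ne_zero, if_neg, if_pos, Nat.add_sub_cancel, add_zero,
      Nat.succ_ne_zero, false_and, if_false, sub_zero, reduceIte]
    calc ∑ i ∈ Finset.range (k + 1), ((-1 : K) ^ (k + i)) • (Sadj i * S (0 + k + 1 - i))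
        = ((-1 : K) ^ k) • ∑ i ∈ Finset.range (k + 1), ((-1 : K) ^ i) • (Sadj i * S (k + 1 - i)) := by
          rw [Finset.smul_sum]
          refine Finset.sum_congr rfl fun i _ => ?_
          rw [smul_smul, ← pow_add, Nat.zero_add]
      _ = Sadj (k + 1) * S 0 := by
          rw [hA, smul_smul, ← pow_add, show k + k = 2 * k by ring, pow_mul]
          norm_num
  | (k + 1), (l + 1) =>
    simp only [Nat.succ_ne_zero, if_neg, Nat.add_sub_cancel, Nat.succ_ne_zero,
      false_and, if_false, sub_zero, reduceIte]
    conv_lhs => rw [show k + 1 + 1 = (k + 1) + 1 from rfl]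
    rw [show (Finset.range (k + 1 + 1)) = Finset.range ((k + 1) + 1) from rfl]
    conv_lhs => rw [Finset.sum_range_succ (fun i =>
      ((-1 : K) ^ (k + 1 + i)) • (Sadj i * S (l + (k + 1) + 1 - i)))]
    have hcancel : (∑ i ∈ Finset.range (k + 1),
          ((-1 : K) ^ (k + i)) • (Sadj i * S (l + 1 + k + 1 - i)))
        + ∑ i ∈ Finset.range (k + 1),
          ((-1 : K) ^ (k + 1 + i)) • (Sadj i * S (l + (k + 1) + 1 - i)) = 0 := by
      rw [← Finset.sum_add_distrib]
      refine Finset.sum_eq_zero fun i hi => ?_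
      have he : l + 1 + k + 1 - i = l + (k + 1) + 1 - i := by omega
      rw [he, ← add_smul, show ((-1 : K) ^ (k + i) + (-1 : K) ^ (k + 1 + i)) = 0 by ring,
        zero_smul]
    rw [← add_assoc, hcancel, zero_add,
      show l + (k + 1) + 1 - (k + 1) = l + 1 by omega,
      show k + 1 + (k + 1) = 2 * (k + 1) by ring, pow_mul]
    norm_num
end

section
/- Let H be a 2-dimensional ℚ-vector space with basis φ_0, φ_1; let μ(φ_a) = (1/2 - a)·φ_a and let ρ ∈ End(H) with ρ(φ_0) = 0, ρ(φ_1) = 2φ_0. Define D on H-valued Laurent polynomials by D(φ z^k) = ρ(φ)z^k + (μ + 3/2)(φ)z^{k+1} + k·φ z^{k+1}. Then for all m ≥ -1, integers k ≥ 0 and a ∈ {0,1}: D^{m+1}(φ_a z^k) = (k+2-a)(k+3-a)⋯(k+2-a+m)·φ_a z^{k+m+1} + 2δ_{a,1}·Σ_{i=1}^{m+1}((k+1)(k+2)⋯(k+1+m)/(k+i))·φ_0 z^{k+m}. -/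
/-- The operator `D(φ z^k) = ρ(φ)z^k + (μ + 3/2)(φ)z^(k+1) + k·φ z^(k+1)` of the
extended dessins d'enfants theory (with `μ φ_a = (1/2 - a)·φ_a`, `ρ φ₀ = 0`,
`ρ φ₁ = 2φ₀`), acting coefficientwise: `F j` is the pair of `(φ₀, φ₁)`-coefficients
of `z^j`. -/
noncomputable def eGddD (F : ℤ → ℚ × ℚ) : ℤ → ℚ × ℚ :=
  fun j => (2 * (F j).2 + ((j : ℚ) + 1) * (F (j - 1)).1, (j : ℚ) * (F (j - 1)).2)

/-- The monomial `φ_a z^k`. -/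
def eGddMono (a : ℕ) (k : ℤ) : ℤ → ℚ × ℚ :=
  fun j => if j = k then (if a = 0 then ((1 : ℚ), (0 : ℚ)) else ((0 : ℚ), (1 : ℚ))) else 0

lemma key0 (k : ℕ) (n : ℕ) :
    eGddD^[n] (eGddMono 0 (k : ℤ))
      = fun j =>
        if j = (k : ℤ) + n then
          ((∏ i ∈ Finset.range n, ((k : ℚ) + 2 + (i : ℚ))), (0 : ℚ))
        else 0 := by
  induction n with
  | zero => funext j; simp [eGddMono]
  | succ n ih =>
    rw [Function.iterate_succ_apply', ih]
    funext j
    simp only [eGddD]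
    push_cast
    by_cases h : j = (k : ℤ) + (n + 1)
    · have h1 : j ≠ (k : ℤ) + n := by omega
      have h2 : (j - 1 : ℤ) = (k : ℤ) + n := by omega
      have h3 : (j : ℚ) = (k : ℚ) + n + 1 := by rw [h]; push_cast; ring
      rw [if_neg h1, if_pos h2, if_pos h]
      simp only [Prod.snd_zero, Prod.mk.injEq, Finset.prod_range_succ, h3]
      constructor <;> ring
    · have h1 : j - 1 ≠ (k : ℤ) + n := by omega
      rw [if_neg h, if_neg h1]
      by_cases h2 : j = (k : ℤ) + n <;> simp [h2]

lemma sumrec (k n : ℕ) :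
    ∑ i ∈ Finset.Icc 1 (n+1),
        (∏ t ∈ Finset.range (n+1), ((k:ℚ)+1+(t:ℚ)))/((k:ℚ)+(i:ℚ))
      = ((k:ℚ)+(n:ℚ)+1)
          * (∑ i ∈ Finset.Icc 1 n,
              (∏ t ∈ Finset.range n, ((k:ℚ)+1+(t:ℚ)))/((k:ℚ)+(i:ℚ)))
        + ∏ t ∈ Finset.range n, ((k:ℚ)+1+(t:ℚ)) := by
  have hne : ((k:ℚ)+(n:ℚ)+1) ≠ 0 := by positivity
  rw [Finset.sum_Icc_succ_top (by omega : 1 ≤ n+1), Finset.prod_range_succ,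
    Finset.mul_sum]
  push_cast
  congr 1
  · exact Finset.sum_congr rfl fun i _ => by ring
  · rw [show ((k:ℚ)+((n:ℚ)+1)) = (k:ℚ)+1+(n:ℚ) from by ring,
      mul_div_cancel_right₀ _ (by positivity : ((k:ℚ)+1+(n:ℚ)) ≠ 0)]

lemma key1 (k : ℕ) (n : ℕ) :
    eGddD^[n] (eGddMono 1 (k : ℤ))
      = fun j =>
        ((if j = (k : ℤ) + n - 1 then
            2 * ∑ i ∈ Finset.Icc 1 n,
              (∏ t ∈ Finset.range n, ((k:ℚ)+1+(t:ℚ)))/((k:ℚ)+(i:ℚ)) else 0),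
         (if j = (k : ℤ) + n then ∏ t ∈ Finset.range n, ((k:ℚ)+1+(t:ℚ)) else 0)) := by
  induction n with
  | zero =>
    funext j
    by_cases h : j = (k : ℤ) <;>
      simp [eGddMono, h, Finset.Icc_eq_empty (by omega : ¬(1:ℕ) ≤ 0), Prod.ext_iff]
  | succ n ih =>
    rw [Function.iterate_succ_apply', ih]
    funext j
    simp only [eGddD]
    push_cast
    have hA : (j - 1 = (k : ℤ) + n - 1) ↔ (j = (k : ℤ) + n) := by omega
    by_cases h : j = (k : ℤ) + n
    · have h2 : j - 1 = (k : ℤ) + n - 1 := by omega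
      have h3 : j ≠ (k : ℤ) + (n + 1) := by omega
      have h4 : j - 1 ≠ (k : ℤ) + n := by omega
      have h5 : j = (k : ℤ) + (n + 1) - 1 := by omega
      have h6 : (j : ℚ) = (k : ℚ) + n := by rw [h]; push_cast; ring
      rw [if_pos h, if_pos h2, if_neg h3, if_neg h4, if_pos h5, h6, sumrec]
      simp only [Prod.mk.injEq]
      constructor <;> ring
    · have h2 : j - 1 ≠ (k : ℤ) + n - 1 := by omega
      rw [if_neg h, if_neg h2]
      by_cases h3 : j = (k : ℤ) + (n + 1)
      · have h4 : j - 1 = (k : ℤ) + n := by omega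
        have h5 : j ≠ (k : ℤ) + (n + 1) - 1 := by omega
        have h6 : (j : ℚ) = (k : ℚ) + n + 1 := by rw [h3]; push_cast; ring
        rw [if_pos h3, if_pos h4, if_neg h5, h6, Finset.prod_range_succ]
        simp only [Prod.mk.injEq]
        constructor <;> ring
      · have h4 : j - 1 ≠ (k : ℤ) + n := by omega
        have h5 : j ≠ (k : ℤ) + (n + 1) - 1 := by omega
        rw [if_neg h3, if_neg h4, if_neg h5]
        simp

/-- `D^(m+1)(φ_a z^k) = (k+2-a)_{m+1}·φ_a z^(k+m+1)
      + 2δ_{a,1}·Σ_{i=1}^{m+1} ((k+1)_{m+1}/(k+i))·φ₀ z^(k+m)` for `m ≥ -1`, `k ≥ 0`. -/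
theorem stmt16 (m : ℤ) (hm : -1 ≤ m) (k : ℕ) (a : ℕ) (ha : a ≤ 1) :
    eGddD^[(m + 1).toNat] (eGddMono a (k : ℤ))
      = fun j =>
        (if j = (k : ℤ) + m + 1 then
            (∏ i ∈ Finset.range (m + 1).toNat, ((k : ℚ) + 2 - (a : ℚ) + (i : ℚ)))
              • (if a = 0 then ((1 : ℚ), (0 : ℚ)) else ((0 : ℚ), (1 : ℚ)))
          else 0)
        + (if j = (k : ℤ) + m then
            ((if a = 1 then (2 : ℚ) else 0)
                * ∑ i ∈ Finset.Icc 1 (m + 1).toNat,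
                    (∏ t ∈ Finset.range (m + 1).toNat, ((k : ℚ) + 1 + (t : ℚ)))
                      / ((k : ℚ) + (i : ℚ)))
              • ((1 : ℚ), (0 : ℚ))
          else 0) := by
  have hn : (((m + 1).toNat : ℤ)) = m + 1 := Int.toNat_of_nonneg (by omega)
  set n := (m + 1).toNat with hdefn
  have e1 : (k : ℤ) + m + 1 = (k : ℤ) + n := by omega
  have e2 : (k : ℤ) + m = (k : ℤ) + n - 1 := by omega
  interval_cases a
  · rw [key0 k n]
    funext j
    simp only [e1, e2, if_pos, Nat.cast_zero, sub_zero, if_neg one_ne_zero,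
      reduceIte, zero_mul, zero_smul, ite_self, add_zero, Prod.smul_mk,
      smul_eq_mul, mul_one, mul_zero]
    by_cases h : j = (k : ℤ) + n <;> simp [h, Prod.ext_iff]
  · rw [key1 k n]
    funext j
    rw [e1, e2]
    simp only [show ((k:ℚ)+2-1) = (k:ℚ)+1 from by ring, Nat.cast_one]
    by_cases h : j = (k : ℤ) + n
    · have h' : ((k : ℤ) + n) ≠ (k : ℤ) + n - 1 := by omega
      simp [h, h', Prod.ext_iff]
    · by_cases h' : j = (k : ℤ) + n - 1 <;> simp [h, h', Prod.ext_iff]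
end

section
/- Let H be a finite-dimensional complex vector space, μ ∈ End(H) diagonalizable (in some basis μφ_a = μ_a φ_a), δ a scalar, and (ρ_i)_{i≥0} endomorphisms satisfying μρ_i = ρ_i(μ + i + 1) for all i. Suppose vectors u_0, u_1, ..., u_n ∈ H satisfy the recursion (k + μ + δ/2)u_k = -Σ_{i=0}^{n-k-1} ρ_i u_{k+i+1} for k = 0, 1, ..., n (so in particular (n + μ + δ/2)u_n = 0). Then (k + μ + δ/2)u_k = 0 for every k = 0, ..., n, and consequently Σ_{i=0}^{n-k-1} ρ_i u_{k+i+1} = 0 for every k; i.e., setting u(z) = Σ_{k=0}^n u_k z^k, one has (z∂_z + μ + δ/2)u(z) = 0 and the nonnegative-power part of ρ(z)u(z) (with ρ(z) = Σ_i ρ_i z^{-i}) vanishes in degrees ≥ 1. -/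
open Module DFinsupp

lemma key {H : Type*} [AddCommGroup H] [Module ℂ H] (μ : Module.End ℂ H)
    (hdiag : (⨆ c : ℂ, Module.End.eigenspace μ c) = ⊤) (c : ℂ) (x : H)
    (h2 : (μ + c • (1 : Module.End ℂ H)) ((μ + c • (1 : Module.End ℂ H)) x) = 0) :
    (μ + c • (1 : Module.End ℂ H)) x = 0 := by
  classical
  set f : Module.End ℂ H := μ + c • (1 : Module.End ℂ H) with hf
  set F := DFinsupp.lsum ℕ (M := fun l : ℂ ↦ ↥(μ.eigenspace l))
      (fun l => (μ.eigenspace l).subtype) with hF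
  have hx : x ∈ ⨆ l : ℂ, μ.eigenspace l := hdiag ▸ Submodule.mem_top
  obtain ⟨d, hd⟩ := (Submodule.mem_iSup_iff_exists_dfinsupp _ x).mp hx
  have hFinj : Function.Injective F := μ.eigenspaces_iSupIndep.dfinsupp_lsum_injective
  -- scaling a dfinsupp componentwise
  have hstep : ∀ d : Π₀ l : ℂ, ↥(μ.eigenspace l),
      F (DFinsupp.mapRange (fun l (v : μ.eigenspace l) => (l + c) • v) (by simp) d) = f (F d) := by
    intro d
    rw [hF, DFinsupp.lsum_apply_apply, DFinsupp.lsum_apply_apply,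
      DFinsupp.sumAddHom_apply, DFinsupp.sumAddHom_apply,
      DFinsupp.sum_mapRange_index (by simp), DFinsupp.sum, DFinsupp.sum, map_sum]
    refine Finset.sum_congr rfl fun l _ => ?_
    have hev : μ ((d l : H)) = l • (d l : H) :=
      Module.End.mem_eigenspace_iff.mp (d l).2
    simp [f, hev, add_smul]
  have h1 : F (DFinsupp.mapRange (fun l (v : μ.eigenspace l) => (l + c) • v) (by simp)
      (DFinsupp.mapRange (fun l (v : μ.eigenspace l) => (l + c) • v) (by simp) d)) = 0 := by
    rw [hstep, hstep, hd, h2]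
  have h0 : DFinsupp.mapRange (fun l (v : μ.eigenspace l) => (l + c) • v) (by simp)
      (DFinsupp.mapRange (fun l (v : μ.eigenspace l) => (l + c) • v) (by simp) d) = 0 :=
    hFinj (by rw [map_zero]; exact h1)
  have hzero : DFinsupp.mapRange (fun l (v : μ.eigenspace l) => (l + c) • v) (by simp) d = 0 := by
    ext l
    have := DFinsupp.ext_iff.mp h0 l
    simp only [DFinsupp.mapRange_apply, DFinsupp.zero_apply] at this ⊢
    rcases eq_or_ne (l + c) 0 with h | h
    · simp [h]
    · have : (d l : μ.eigenspace l) = 0 := by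
        have := this
        rw [smul_smul] at this
        exact (smul_eq_zero_iff_eq (Units.mk0 _ (mul_ne_zero h h))).mp this
      simp [this]
  have : f (F d) = 0 := by rw [← hstep, hzero, map_zero]
  rwa [hd] at this

/-- Downward-induction consequence of the homogeneity of the `J`-function: if `μ` is
diagonalizable, `μρ_i = ρ_i(μ + i + 1)`, and the vectors `u_0, ..., u_n` satisfy
`(k + μ + δ/2)u_k = -Σ_{i=0}^{n-k-1} ρ_i u_{k+i+1}`, then `(k + μ + δ/2)u_k = 0`
for every `k ≤ n`, and consequently `Σ_{i=0}^{n-k-1} ρ_i u_{k+i+1} = 0` for every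
`k ≤ n` (i.e. `(z∂_z + μ + δ/2)u(z) = 0` and `[ρ(z)u(z)]` has no positive powers). -/
theorem stmt17 (H : Type*) [AddCommGroup H] [Module ℂ H] [FiniteDimensional ℂ H]
    (μ : Module.End ℂ H) (hdiag : (⨆ c : ℂ, Module.End.eigenspace μ c) = ⊤)
    (δ : ℂ) (ρ : ℕ → Module.End ℂ H)
    (hρ : ∀ i : ℕ, ∀ x : H, μ (ρ i x) = ρ i (μ x) + ((i : ℂ) + 1) • ρ i x)
    (n : ℕ) (u : ℕ → H)
    (hrec : ∀ k : ℕ, k ≤ n →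
      (k : ℂ) • u k + μ (u k) + (δ / 2) • u k
        = -∑ i ∈ Finset.range (n - k), ρ i (u (k + i + 1))) :
    (∀ k : ℕ, k ≤ n → (k : ℂ) • u k + μ (u k) + (δ / 2) • u k = 0)
      ∧ ∀ k : ℕ, k ≤ n → ∑ i ∈ Finset.range (n - k), ρ i (u (k + i + 1)) = 0 := by
  -- notation: f c = μ + c • 1
  set f : ℂ → Module.End ℂ H := fun c => μ + c • (1 : Module.End ℂ H) with hfdef
  have hfapp : ∀ (c : ℂ) (x : H), f c x = μ x + c • x := by
    intro c x; simp [hfdef]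
  have hexpr : ∀ (k : ℕ) (x : H),
      (k : ℂ) • x + μ x + (δ / 2) • x = f ((k : ℂ) + δ / 2) x := by
    intro k x; rw [hfapp, add_smul]; abel
  -- commutation : f (k + δ/2) ∘ ρ i = ρ i ∘ f (k+i+1 + δ/2)
  have hcomm : ∀ (k i : ℕ) (y : H),
      f ((k : ℂ) + δ / 2) (ρ i y) = ρ i (f (((k + i + 1 : ℕ) : ℂ) + δ / 2) y) := by
    intro k i y
    rw [hfapp, hfapp, hρ i y, map_add, map_smul]
    push_cast
    rw [add_assoc, ← add_smul]
    ring_nf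
  -- main downward induction
  have main : ∀ m : ℕ, ∀ k : ℕ, k ≤ n → n - k = m →
      (k : ℂ) • u k + μ (u k) + (δ / 2) • u k = 0 := by
    intro m
    induction m using Nat.strong_induction_on with
    | _ m ih =>
      intro k hk hm
      have hsq : f ((k : ℂ) + δ / 2) (f ((k : ℂ) + δ / 2) (u k)) = 0 := by
        have h1 := hrec k hk
        rw [hexpr] at h1
        rw [h1, map_neg, map_sum]
        rw [neg_eq_zero]
        refine Finset.sum_eq_zero fun i hi => ?_
        rw [hcomm]
        have hi' : i < n - k := Finset.mem_range.mp hi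
        have hle : k + i + 1 ≤ n := by omega
        have hIH := ih (n - (k + i + 1)) (by omega) (k + i + 1) hle rfl
        rw [hexpr] at hIH
        rw [hIH, map_zero]
      have := key μ hdiag ((k : ℂ) + δ / 2) (u k) hsq
      rw [hexpr]
      exact this
  have part1 : ∀ k : ℕ, k ≤ n → (k : ℂ) • u k + μ (u k) + (δ / 2) • u k = 0 :=
    fun k hk => main (n - k) k hk rfl
  refine ⟨part1, fun k hk => ?_⟩
  have := hrec k hk
  rw [part1 k hk] at this
  exact (neg_eq_zero.mp this.symm)
end
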